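/- For all n ≥ k ≥ 2 and r ≥ 2, A_k(n;r,1) > m_k(n; r, 1), i.e., there exists an r-coloring of the k-subsets of [m_k(n;r,1)] with no monochromatic tight monotone path of length n. -/

import Mathlib

/-- The `(j)`-fold iterated power set of a type `α`. -/
abbrev IterSet (α : Type) : ℕ → Type
  | 0 => α
  | j + 1 => Set (IterSet α j)

/-- The generalized `S`-less relation `<_S^{(j+2)}` on the `j`-fold iterated
power set of `[n]^R` (vectors are `Fin R → Fin n`): at level `0` (i.e. `k = 2`),
`x <_S y` iff `x ℓ < y ℓ` in at least `S` coordinates; at level `j + 1`,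
`F <_S F'` iff some distinguished `G ∈ F'` satisfies `H <_S G` for all `H ∈ F`. -/
def GenRel (n R S : ℕ) : (j : ℕ) → IterSet (Fin R → Fin n) j → IterSet (Fin R → Fin n) j → Prop
  | 0, x, y => S ≤ (Finset.univ.filter fun ℓ => x ℓ < y ℓ).card
  | j + 1, F, F' => ∃ G ∈ F', ∀ H ∈ F, GenRel n R S j H G

/-- `m_k(n; R, S)`: the maximum length of a generalized `S`-increasing
sequence in the `(k-2)`-fold iterated power set of `[n]^R`. -/
noncomputable def mGen (k n R S : ℕ) : ℕ :=
  sSup {t : ℕ | ∃ f : Fin t → IterSet (Fin R → Fin n) (k - 2),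
    ∀ i j : Fin t, i < j → GenRel n R S (k - 2) (f i) (f j)}

/-- `A_k(n; r, s)`: the least `N` such that every `r`-coloring of the
`k`-element subsets of `[N]` (identified with `{0, …, N-1}`) contains a tight
monotone path with `n` edges using at most `s` colors. -/
noncomputable def colorAvoidA (k n r s : ℕ) : ℕ :=
  sInf {N : ℕ | ∀ Δ : Finset ℕ → Fin r,
    ∃ w : ℕ → ℕ, (∀ i < n + k - 2, w i < w (i + 1)) ∧ (∀ i ≤ n + k - 2, w i < N) ∧
      ((Finset.range n).image fun i => Δ ((Finset.Icc i (i + k - 1)).image w)).card ≤ s}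


lemma iterSet_nonempty (α : Type) [Nonempty α] : ∀ j, Nonempty (IterSet α j)
  | 0 => ‹Nonempty α›
  | j + 1 => ⟨(∅ : Set (IterSet α j))⟩

lemma iterSet_finite (α : Type) [Finite α] : ∀ j, Finite (IterSet α j)
  | 0 => ‹Finite α›
  | j + 1 => by have := iterSet_finite α j; exact inferInstanceAs (Finite (Set (IterSet α j)))

lemma genRel_irrefl (n r : ℕ) : ∀ j (x : IterSet (Fin r → Fin n) j), ¬ GenRel n r 1 j x x
  | 0, x, h => by
    simp only [GenRel] at h
    have : (Finset.univ.filter fun ℓ => x ℓ < x ℓ) = ∅ := by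
      simp [Finset.filter_eq_empty_iff]
    rw [this] at h; simp at h
  | j + 1, F, ⟨G, hG, hall⟩ => genRel_irrefl n r j G (hall G hG)

lemma icc_eq_image (i K : ℕ) :
    Finset.Icc i (i + (K + 1)) = Finset.image (fun j : Fin (K + 2) => i + (j : ℕ)) Finset.univ := by
  ext a
  simp only [Finset.mem_Icc, Finset.mem_image, Finset.mem_univ, true_and]
  constructor
  · rintro ⟨h1, h2⟩
    exact ⟨⟨a - i, by omega⟩, by simp; omega⟩
  · rintro ⟨j, rfl⟩
    have := j.isLt; omega

lemma strictmono_image_unique {q : ℕ} {t t' : Fin q → ℕ} (ht : StrictMono t)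
    (ht' : StrictMono t')
    (h : Finset.image t Finset.univ = Finset.image t' Finset.univ) : t = t' := by
  have hr : Set.range t = Set.range t' := by
    have := congrArg (fun s : Finset ℕ => (s : Set ℕ)) h
    simpa [Finset.coe_image, Set.image_univ] using this
  have hwf : WellFoundedLT (Fin q) := inferInstance
  exact ((@Set.range_injOn_strictMono (Fin q) ℕ _ _ hwf).eq_iff ht ht').mp hr

def MSet (n r K : ℕ) : Set ℕ :=
  {t : ℕ | ∃ f : Fin t → IterSet (Fin r → Fin n) K,
    ∀ i j : Fin t, i < j → GenRel n r 1 K (f i) (f j)}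

lemma mSet_bddAbove (n r K : ℕ) : BddAbove (MSet n r K) := by
  refine ⟨Nat.card (IterSet (Fin r → Fin n) K), ?_⟩
  rintro t ⟨f, hf⟩
  have hfin := iterSet_finite (Fin r → Fin n) K
  have hinj : Function.Injective f := by
    intro i j hij
    rcases lt_trichotomy i j with h | h | h
    · exact absurd (hij ▸ hf i j h) (genRel_irrefl n r K (f j))
    · exact h
    · exact absurd (hij ▸ hf j i h) (genRel_irrefl n r K (f j))
  simpa using Nat.card_le_card_of_injective f hinj

lemma zero_mem_mSet (n r K : ℕ) : 0 ∈ MSet n r K :=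
  ⟨Fin.elim0, fun i => i.elim0⟩

lemma one_mem_mSet (n r K : ℕ) (hn : 0 < n) : 1 ∈ MSet n r K := by
  have : Nonempty (Fin n) := ⟨⟨0, hn⟩⟩
  obtain ⟨x⟩ := iterSet_nonempty (Fin r → Fin n) K
  exact ⟨fun _ => x, fun i j hij => absurd (Subsingleton.elim i j) (ne_of_lt hij)⟩

lemma mSet_sSup_mem (n r K : ℕ) : sSup (MSet n r K) ∈ MSet n r K :=
  Nat.sSup_mem ⟨0, zero_mem_mSet n r K⟩ (mSet_bddAbove n r K)

lemma chainMap_exists (n r K m : ℕ) (hn : 0 < n)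
    (f : Fin m → IterSet (Fin r → Fin n) K)
    (hf : ∀ i j : Fin m, i < j → GenRel n r 1 K (f i) (f j)) :
    ∀ j d : ℕ, K - j = d → j ≤ K →
      ∃ g : (Fin (j + 1) → Fin m) → IterSet (Fin r → Fin n) d,
        ∀ t : Fin (j + 2) → Fin m, StrictMono t →
          GenRel n r 1 d (g fun i => t i.castSucc) (g fun i => t i.succ) := by
  have : Nonempty (Fin n) := ⟨⟨0, hn⟩⟩
  intro j
  induction j with
  | zero =>
    intro d hd _
    subst hd
    simp only [Nat.sub_zero]
    refine ⟨fun t => f (t 0), fun t ht => ?_⟩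
    exact hf _ _ (ht (show ((0 : Fin 1).castSucc : Fin 2) < (0 : Fin 1).succ by decide))
  | succ j IH =>
    intro d hd hj
    obtain ⟨g, hg⟩ := IH (d + 1) (by omega) (by omega)
    have key : ∀ t : Fin (j + 2) → Fin m, StrictMono t →
        ∃ G, G ∈ g (fun i => t i.succ) ∧
          ∀ H ∈ g (fun i => t i.castSucc), GenRel n r 1 d H G := by
      intro t ht
      have h := hg t ht
      simp only [GenRel] at h
      exact h
    obtain ⟨junk⟩ := iterSet_nonempty (Fin r → Fin n) d
    refine ⟨fun t => if ht : StrictMono t then (key t ht).choose else junk, fun t ht => ?_⟩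
    have hs1 : StrictMono (fun i : Fin (j + 2) => t i.castSucc) :=
      fun a b hab => ht (Fin.castSucc_lt_castSucc_iff.mpr hab)
    have hs2 : StrictMono (fun i : Fin (j + 2) => t i.succ) :=
      fun a b hab => ht (Fin.succ_lt_succ_iff.mpr hab)
    simp only [dif_pos hs1, dif_pos hs2]
    have h1 := (key _ hs1).choose_spec.1
    have h2 := (key _ hs2).choose_spec.2
    have heq : (fun i : Fin (j + 1) => t i.castSucc.succ)
        = (fun i : Fin (j + 1) => t i.succ.castSucc) :=
      funext fun i => by rw [Fin.succ_castSucc]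
    refine h2 _ ?_
    rw [heq]
    exact h1

lemma lower_bound (n k r : ℕ) (hk : 2 ≤ k) (hkn : k ≤ n) (hr : 1 ≤ r) :
    ∃ Δ : Finset ℕ → Fin r, ∀ w : ℕ → ℕ,
      ¬((∀ i < n + k - 2, w i < w (i + 1)) ∧
        (∀ i ≤ n + k - 2, w i < sSup (MSet n r (k - 2))) ∧
        ((Finset.range n).image fun i => Δ ((Finset.Icc i (i + k - 1)).image w)).card ≤ 1) := by
  set K := k - 2 with hKdef
  set m := sSup (MSet n r K) with hmdef
  have hn : 0 < n := by omega
  have hrpos : 0 < r := hr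
  obtain ⟨f, hf⟩ := mSet_sSup_mem n r K
  obtain ⟨g, hg⟩ := chainMap_exists n r K m hn f hf K 0 (by omega) le_rfl
  have hcol : ∀ (t : Fin (K + 2) → Fin m), StrictMono t →
      (Finset.univ.filter fun ℓ : Fin r =>
        g (fun i => t i.castSucc) ℓ < g (fun i => t i.succ) ℓ).Nonempty := by
    intro t ht
    have h := hg t ht
    simp only [GenRel] at h
    exact Finset.card_pos.mp h
  classical
  set Δ : Finset ℕ → Fin r := fun A =>
    if h : ∃ ℓ : Fin r, ∃ t : Fin (K + 2) → Fin m, StrictMono t ∧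
        A = Finset.image (fun i => ((t i : ℕ))) Finset.univ ∧
        g (fun i => t i.castSucc) ℓ < g (fun i => t i.succ) ℓ then h.choose
    else ⟨0, hrpos⟩ with hΔdef
  have hΔw : ∀ (t : Fin (K + 2) → Fin m), StrictMono t →
      g (fun i => t i.castSucc) (Δ (Finset.image (fun i => ((t i : ℕ))) Finset.univ))
        < g (fun i => t i.succ) (Δ (Finset.image (fun i => ((t i : ℕ))) Finset.univ)) := by
    intro t ht
    obtain ⟨ℓ0, hℓ0⟩ := hcol t ht
    rw [Finset.mem_filter] at hℓ0
    have hex : ∃ ℓ : Fin r, ∃ t' : Fin (K + 2) → Fin m, StrictMono t' ∧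
        Finset.image (fun i => ((t i : ℕ))) Finset.univ
          = Finset.image (fun i => ((t' i : ℕ))) Finset.univ ∧
        g (fun i => t' i.castSucc) ℓ < g (fun i => t' i.succ) ℓ :=
      ⟨ℓ0, t, ht, rfl, hℓ0.2⟩
    simp only [hΔdef]
    rw [dif_pos hex]
    obtain ⟨t', ht', himg, hlt⟩ := hex.choose_spec
    have hchoose : t' = t := by
      have hval : (fun i => ((t' i : ℕ))) = fun i => ((t i : ℕ)) :=
        strictmono_image_unique (fun a b hab => ht' hab) (fun a b hab => ht hab)
          himg.symm
      funext i
      exact Fin.val_injective (congrFun hval i)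
    rw [hchoose] at hlt
    exact hlt
  refine ⟨Δ, fun w => ?_⟩
  rintro ⟨hw1, hw2, hw3⟩
  have hnk : n + k - 2 = n + K := by omega
  rw [hnk] at hw1 hw2
  have hmono : ∀ b, b ≤ n + K → ∀ a < b, w a < w b := by
    intro b
    induction b with
    | zero => omega
    | succ b ih =>
      intro hb a ha
      have hb' : w b < w (b + 1) := hw1 b (by omega)
      rcases Nat.lt_or_ge a b with h | h
      · exact lt_trans (ih (by omega) a h) hb'
      · have : a = b := by omega
        subst this; exact hb'
  have hm : 0 < m := lt_of_lt_of_le Nat.one_pos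
    (le_csSup (mSet_bddAbove n r K) (one_mem_mSet n r K hn))
  set tt : ℕ → Fin (K + 2) → Fin m := fun i j =>
    if h : w (i + (j : ℕ)) < m then ⟨w (i + (j : ℕ)), h⟩ else ⟨0, hm⟩ with htt
  set u : ℕ → Fin (K + 1) → Fin m := fun i j =>
    if h : w (i + (j : ℕ)) < m then ⟨w (i + (j : ℕ)), h⟩ else ⟨0, hm⟩ with hu
  have httval : ∀ i, i + K + 1 ≤ n + K → ∀ j : Fin (K + 2), ((tt i j : ℕ)) = w (i + j) := by
    intro i hi j
    have hlt : w (i + (j : ℕ)) < m := hw2 _ (by have := j.isLt; omega)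
    simp [htt, dif_pos hlt]
  have huval : ∀ i, i ≤ n → ∀ j : Fin (K + 1), ((u i j : ℕ)) = w (i + j) := by
    intro i hi j
    have hlt : w (i + (j : ℕ)) < m := hw2 _ (by have := j.isLt; omega)
    simp [hu, dif_pos hlt]
  have httmono : ∀ i, i < n → StrictMono (tt i) := by
    intro i hi a b hab
    have ha := httval i (by omega) a
    have hb := httval i (by omega) b
    have : w (i + (a : ℕ)) < w (i + (b : ℕ)) :=
      hmono _ (by have := b.isLt; omega) _ (by exact Nat.add_lt_add_left hab i)
    show ((tt i a : ℕ)) < ((tt i b : ℕ))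
    omega
  have hcs : ∀ i, (fun j : Fin (K + 1) => tt i j.castSucc) = u i := by
    intro i
    funext j
    simp [htt, hu, Fin.coe_castSucc]
  have hsucc : ∀ i, (fun j : Fin (K + 1) => tt i j.succ) = u (i + 1) := by
    intro i
    funext j
    simp only [htt, hu, Fin.val_succ, show i + ((j : ℕ) + 1) = i + 1 + (j : ℕ) from by omega]
  have hwindow : ∀ i, i < n →
      (Finset.Icc i (i + k - 1)).image w
        = Finset.image (fun j => ((tt i j : ℕ))) Finset.univ := by
    intro i hi
    have h1 : Finset.Icc i (i + k - 1) = Finset.Icc i (i + (K + 1)) := by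
      congr 1; omega
    rw [h1, icc_eq_image i K, Finset.image_image]
    refine Finset.image_congr ?_
    intro j _
    exact (httval i (by omega) j).symm
  have hcard := Finset.card_le_one.mp hw3
  set c := Δ ((Finset.Icc 0 (0 + k - 1)).image w) with hc
  have hsame : ∀ i, i < n → Δ ((Finset.Icc i (i + k - 1)).image w) = c := by
    intro i hi
    refine hcard _ ?_ _ ?_
    · exact Finset.mem_image_of_mem _ (Finset.mem_range.mpr hi)
    · exact Finset.mem_image_of_mem _ (Finset.mem_range.mpr hn)
  have hstep : ∀ i, i < n → g (u i) c < g (u (i + 1)) c := by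
    intro i hi
    have h := hΔw (tt i) (httmono i hi)
    rw [← hwindow i hi] at h
    rw [hcs i, hsucc i] at h
    rw [hsame i hi] at h
    exact h
  have hchain : ∀ i, i ≤ n → i ≤ ((g (u i) c : Fin n) : ℕ) := by
    intro i
    induction i with
    | zero => omega
    | succ i ih =>
      intro hi
      have h1 := ih (by omega)
      have h2 := hstep i (by omega)
      have h3 : ((g (u i) c : Fin n) : ℕ) < ((g (u (i + 1)) c : Fin n) : ℕ) := h2
      omega
  have := hchain n le_rfl
  have := (g (u n) c : Fin n).isLt
  omega

lemma upper_bound (n k r : ℕ) (hk : 2 ≤ k) (hkn : k ≤ n) (hr : 1 ≤ r)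
    (Δ : Finset ℕ → Fin r) :
    ∃ w : ℕ → ℕ, (∀ i < n + k - 2, w i < w (i + 1)) ∧
      (∀ i ≤ n + k - 2, w i < sSup (MSet n r (k - 2)) + 1) ∧
      ((Finset.range n).image fun i => Δ ((Finset.Icc i (i + k - 1)).image w)).card ≤ 1 := by
  classical
  set K := k - 2 with hKdef
  set m := sSup (MSet n r K) with hmdef
  set N := m + 1 with hNdef
  have hn : 0 < n := by omega
  by_contra hcon
  rw [not_exists] at hcon
  have h : ∀ w : ℕ → ℕ, ¬((∀ i < n + K, w i < w (i + 1)) ∧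
      (∀ i ≤ n + K, w i < N) ∧
      ((Finset.range n).image fun i => Δ ((Finset.Icc i (i + k - 1)).image w)).card ≤ 1) := by
    intro w
    have := hcon w
    rwa [show n + k - 2 = n + K from by omega] at this
  set IsPath : ℕ → Fin r → (Fin (K + 1) → Fin N) → Prop := fun e c s =>
    ∃ w : ℕ → ℕ, (∀ i < e + K, w i < w (i + 1)) ∧ (∀ i ≤ e + K, w i < N) ∧
      (∀ i < e, Δ ((Finset.Icc i (i + k - 1)).image w) = c) ∧
      (∀ j : Fin (K + 1), w (e + (j : ℕ)) = ((s j : ℕ))) with hIsPath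
  -- any path has fewer than n edges
  have claim1 : ∀ e c s, IsPath e c s → e < n := by
    intro e c s ⟨w, hw1, hw2, hw3, _⟩
    by_contra he
    have he' : n ≤ e := by omega
    refine h w ⟨fun i hi => hw1 i (by omega), fun i hi => hw2 i (by omega), ?_⟩
    have hsub : ((Finset.range n).image fun i => Δ ((Finset.Icc i (i + k - 1)).image w))
        ⊆ {c} := by
      intro x hx
      rw [Finset.mem_image] at hx
      obtain ⟨i, hi, rfl⟩ := hx
      rw [Finset.mem_range] at hi
      rw [Finset.mem_singleton]
      exact hw3 i (by omega)
    calc _ ≤ ({c} : Finset (Fin r)).card := Finset.card_le_card hsub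
    _ = 1 := Finset.card_singleton c
  -- trivial path of length 0
  have claim0 : ∀ (s : Fin (K + 1) → Fin N), StrictMono s → ∀ c, IsPath 0 c s := by
    intro s hs c
    refine ⟨fun x => if hx : x < K + 1 then ((s ⟨x, hx⟩ : ℕ)) else 0, ?_, ?_, ?_, ?_⟩
    · intro i hi
      dsimp only
      rw [dif_pos (show i < K + 1 by omega), dif_pos (show i + 1 < K + 1 by omega)]
      exact hs (show (⟨i, by omega⟩ : Fin (K + 1)) < ⟨i + 1, by omega⟩ from by
        simp only [Fin.lt_def]; omega)
    · intro i hi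
      dsimp only
      rw [dif_pos (show i < K + 1 by omega)]
      exact (s _).isLt
    · intro i hi; omega
    · intro j
      dsimp only
      rw [Nat.zero_add, dif_pos j.isLt]
  set L : (Fin (K + 1) → Fin N) → Fin r → ℕ := fun s c => sSup {e | IsPath e c s} with hL
  have hLbdd : ∀ s c, BddAbove {e | IsPath e c s} :=
    fun s c => ⟨n, fun e he => le_of_lt (claim1 e c s he)⟩
  have hLmem : ∀ s c, StrictMono s → IsPath (L s c) c s := by
    intro s c hs
    exact Nat.sSup_mem ⟨0, claim0 s hs c⟩ (hLbdd s c)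
  have hLle : ∀ s c, StrictMono s → L s c ≤ n - 1 := by
    intro s c hs
    have := claim1 _ c s (hLmem s c hs)
    omega
  -- extension of paths
  have key : ∀ (t : Fin (K + 2) → Fin N), StrictMono t → ∀ e,
      IsPath e (Δ (Finset.image (fun j => ((t j : ℕ))) Finset.univ)) (fun i => t i.castSucc) →
      IsPath (e + 1) (Δ (Finset.image (fun j => ((t j : ℕ))) Finset.univ)) (fun i => t i.succ) := by
    intro t ht e ⟨w, hw1, hw2, hw3, hw4⟩
    set c := Δ (Finset.image (fun j => ((t j : ℕ))) Finset.univ) with hc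
    set v := ((t (Fin.last (K + 1)) : ℕ)) with hv
    set w' : ℕ → ℕ := fun x => if x ≤ e + K then w x else v with hw'
    have ha : ∀ i, i ≤ e + K → w' i = w i := fun i hi => if_pos hi
    have hb : ∀ i, e + K < i → w' i = v := fun i hi => if_neg (by omega)
    have hwin : ∀ j : Fin (K + 2), w' (e + (j : ℕ)) = ((t j : ℕ)) := by
      intro j
      rcases Nat.lt_or_ge (j : ℕ) (K + 1) with hj | hj
      · rw [ha _ (by omega), hw4 ⟨j, hj⟩]
        dsimp only
        exact congrArg (fun x => ((t x : ℕ))) (Fin.ext rfl)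
      · have hj' : (j : ℕ) = K + 1 := by have := j.isLt; omega
        have hjl : j = Fin.last (K + 1) := Fin.ext (by simp [Fin.last]; omega)
        rw [hb _ (by omega), hjl]
    refine ⟨w', ?_, ?_, ?_, ?_⟩
    · intro i hi
      rcases Nat.lt_or_ge i (e + K) with h' | h'
      · rw [ha i (by omega), ha (i + 1) (by omega)]
        exact hw1 i h'
      · have hi' : i = e + K := by omega
        subst hi'
        rw [ha _ le_rfl, hb _ (by omega)]
        have h1 : w (e + K) = ((t (Fin.castSucc ⟨K, by omega⟩) : ℕ)) := hw4 ⟨K, by omega⟩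
        rw [h1]
        exact ht (show Fin.castSucc ⟨K, by omega⟩ < Fin.last (K + 1) from by
          simp [Fin.lt_def, Fin.last])
    · intro i hi
      rcases Nat.lt_or_ge (e + K) i with h' | h'
      · rw [hb _ h']
        exact (t (Fin.last (K + 1))).isLt
      · rw [ha i h']; exact hw2 i h'
    · intro i hi
      rcases Nat.lt_or_ge i e with h' | h'
      · rw [show (Finset.Icc i (i + k - 1)).image w' = (Finset.Icc i (i + k - 1)).image w
          from Finset.image_congr fun x hx => by
            rw [Finset.coe_Icc, Set.mem_Icc] at hx
            exact ha x (by omega)]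
        exact hw3 i h'
      · have hi' : i = e := by omega
        subst hi'
        have h1 : Finset.Icc i (i + k - 1) = Finset.Icc i (i + (K + 1)) := by
          congr 1; omega
        rw [h1, icc_eq_image i K, Finset.image_image]
        rw [show (w' ∘ fun j : Fin (K + 2) => i + (j : ℕ)) = fun j => ((t j : ℕ))
          from funext fun j => hwin j]
    · intro j
      have h1 : e + 1 + (j : ℕ) = e + ((j : ℕ) + 1) := by omega
      rw [h1]
      have h2 := hwin j.succ
      rw [Fin.val_succ] at h2
      exact h2
  -- the level-0 assignment
  set vec : (Fin (K + 1) → Fin N) → IterSet (Fin r → Fin n) 0 := fun s =>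
    (fun c => (⟨min (L s c) (n - 1), by omega⟩ : Fin n)) with hvec
  have base : ∀ t : Fin (K + 2) → Fin N, StrictMono t →
      GenRel n r 1 0 (vec fun i => t i.castSucc) (vec fun i => t i.succ) := by
    intro t ht
    have hs1 : StrictMono (fun i : Fin (K + 1) => t i.castSucc) :=
      fun a b hab => ht (Fin.castSucc_lt_castSucc_iff.mpr hab)
    have hs2 : StrictMono (fun i : Fin (K + 1) => t i.succ) :=
      fun a b hab => ht (Fin.succ_lt_succ_iff.mpr hab)
    set c := Δ (Finset.image (fun j => ((t j : ℕ))) Finset.univ) with hc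
    have h1 : IsPath (L (fun i => t i.castSucc) c + 1) c (fun i => t i.succ) :=
      key t ht _ (hLmem _ c hs1)
    have h2 : L (fun i => t i.castSucc) c + 1 ≤ L (fun i => t i.succ) c :=
      le_csSup (hLbdd _ c) h1
    have h3 := hLle _ c hs1
    have h4 := hLle _ c hs2
    simp only [GenRel]
    have hmemc : c ∈ Finset.univ.filter fun ℓ : Fin r =>
        vec (fun i => t i.castSucc) ℓ < vec (fun i => t i.succ) ℓ := by
      rw [Finset.mem_filter]
      refine ⟨Finset.mem_univ c, ?_⟩
      simp only [hvec, Fin.lt_def]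
      omega
    exact Finset.card_pos.mpr ⟨c, hmemc⟩
  -- main induction building the iterated sets
  have claim : ∀ d q : ℕ, 1 ≤ q → q + d = K + 1 →
      ∃ ψ : (Fin q → Fin N) → IterSet (Fin r → Fin n) d,
        ∀ t : Fin (q + 1) → Fin N, StrictMono t →
          GenRel n r 1 d (ψ fun i => t i.castSucc) (ψ fun i => t i.succ) := by
    intro d
    induction d with
    | zero =>
      intro q _ hq
      have : q = K + 1 := by omega
      subst this
      exact ⟨vec, base⟩
    | succ d IH =>
      intro q hq1 hq
      obtain ⟨ψ, hψ⟩ := IH (q + 1) (by omega) (by omega)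
      refine ⟨fun t => {x | ∃ s : Fin (q + 1) → Fin N, StrictMono s ∧
        (fun i => s i.succ) = t ∧ x = ψ s}, ?_⟩
      intro t ht
      simp only [GenRel]
      refine ⟨ψ t, ⟨t, ht, rfl, rfl⟩, ?_⟩
      rintro H ⟨s, hs, hseq, rfl⟩
      -- combine s and t into a (q+2)-tuple
      set uu : Fin (q + 2) → Fin N := fun i => Fin.cases (s 0) t i with huu
      have hcs : (fun i : Fin (q + 1) => uu i.castSucc) = s := by
        funext i
        induction i using Fin.cases with
        | zero => simp [huu]
        | succ j =>
          rw [show (Fin.castSucc j.succ) = (Fin.castSucc j).succ from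
            (Fin.succ_castSucc j).symm]
          simp only [huu, Fin.cases_succ]
          exact (congrFun hseq j).symm
      have hsc : (fun i : Fin (q + 1) => uu i.succ) = t := by
        funext i
        simp [huu]
      have hlt : ∀ i : Fin (q + 1), s i < t i := by
        intro i
        induction i using Fin.cases with
        | zero =>
          have h0 : s (Fin.succ ⟨0, by omega⟩) = t (Fin.castSucc (⟨0, by omega⟩ : Fin q)) :=
            congrFun hseq ⟨0, by omega⟩
          have h1 : s 0 < s (Fin.succ (⟨0, by omega⟩ : Fin q)) := hs (Fin.succ_pos _)
          rw [h0] at h1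
          have h2 : t (Fin.castSucc (⟨0, by omega⟩ : Fin q)) = t 0 :=
            congrArg t (Fin.ext rfl)
          rwa [h2] at h1
        | succ j =>
          have h0 : s (Fin.succ j) = t (Fin.castSucc j) := congrFun hseq j
          rw [h0]
          exact ht Fin.castSucc_lt_succ
      have huumono : StrictMono uu := by
        rw [Fin.strictMono_iff_lt_succ]
        intro i
        have := hlt i
        rwa [← congrFun hcs i, ← congrFun hsc i] at this
      have := hψ uu huumono
      rwa [hcs, hsc] at this
  -- conclude: a GenRel-increasing sequence of length N = m + 1
  obtain ⟨ψ, hψ⟩ := claim K 1 le_rfl (by omega)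
  have hNmem : N ∈ MSet n r K := by
    refine ⟨fun a => ψ (fun _ => a), ?_⟩
    intro a b hab
    set t : Fin 2 → Fin N := fun i => if (i : ℕ) = 0 then a else b with htdef
    have htm : StrictMono t := by
      intro i j hij
      have hi := i.isLt
      have hj := j.isLt
      have : (i : ℕ) = 0 ∧ (j : ℕ) = 1 := by
        rw [Fin.lt_def] at hij; omega
      simp [htdef, this.1, this.2]
      rw [if_pos (Fin.ext (by simp [this.1])), if_neg (fun h => by simp [h] at this)]
      exact hab
    have := hψ t htm
    have e1 : (fun i : Fin 1 => t i.castSucc) = fun _ => a := by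
      funext i
      simp [htdef, Fin.coe_castSucc]
      exact fun h => absurd (Subsingleton.elim i 0) h
    have e2 : (fun i : Fin 1 => t i.succ) = fun _ => b := by
      funext i
      simp [htdef, Fin.val_succ]
    rwa [e1, e2] at this
  have := le_csSup (mSet_bddAbove n r K) hNmem
  omega

theorem mGen_lt_colorAvoidA_mono' (n k r : ℕ) (hk : 2 ≤ k) (hkn : k ≤ n)
    (hr : 2 ≤ r) :
    sSup (MSet n r (k - 2)) < sInf {N : ℕ | ∀ Δ : Finset ℕ → Fin r,
      ∃ w : ℕ → ℕ, (∀ i < n + k - 2, w i < w (i + 1)) ∧ (∀ i ≤ n + k - 2, w i < N) ∧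
        ((Finset.range n).image fun i => Δ ((Finset.Icc i (i + k - 1)).image w)).card ≤ 1} := by
  set m := sSup (MSet n r (k - 2)) with hm
  set S := {N : ℕ | ∀ Δ : Finset ℕ → Fin r,
      ∃ w : ℕ → ℕ, (∀ i < n + k - 2, w i < w (i + 1)) ∧ (∀ i ≤ n + k - 2, w i < N) ∧
        ((Finset.range n).image fun i => Δ ((Finset.Icc i (i + k - 1)).image w)).card ≤ 1}
    with hS
  have hub : m + 1 ∈ S := fun Δ => upper_bound n k r hk hkn (by omega) Δ
  have hlb : m ∉ S := by
    intro hmem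
    obtain ⟨Δ, hΔ⟩ := lower_bound n k r hk hkn (by omega)
    obtain ⟨w, hw1, hw2, hw3⟩ := hmem Δ
    exact hΔ w ⟨hw1, hw2, hw3⟩
  have hmono : ∀ N N', N ∈ S → N ≤ N' → N' ∈ S := by
    intro N N' hN hle Δ
    obtain ⟨w, hw1, hw2, hw3⟩ := hN Δ
    exact ⟨w, hw1, fun i hi => lt_of_lt_of_le (hw2 i hi) hle, hw3⟩
  have hinf : sInf S ∈ S := Nat.sInf_mem ⟨m + 1, hub⟩
  by_contra hcon
  exact hlb (hmono _ _ hinf (by omega))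

/-- For all `n ≥ k ≥ 2` and `r ≥ 2`, `A_k(n; r, 1) > m_k(n; r, 1)`: there is
an `r`-coloring of the `k`-subsets of `[m_k(n; r, 1)]` with no monochromatic
tight monotone path of length `n` (here `binom(r,1) = r`, `binom(r-1,0) = 1`). -/
theorem mGen_lt_colorAvoidA_mono (n k r : ℕ) (hk : 2 ≤ k) (hkn : k ≤ n)
    (hr : 2 ≤ r) :
    mGen k n r 1 < colorAvoidA k n r 1 :=
  mGen_lt_colorAvoidA_mono' n k r hk hkn hr
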